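/- arXiv:1910.00183 — 3 statements merged into one kernel-verified Lean document; each statement's English description precedes it below -/
import Mathlib

section
/- Let G be a connected undirected graph on vertices {1,…,n} (n ≥ 2) and d ≥ 1, and let ν = inf{ (∑_i ‖F(x)_i‖²)^{1/2} : x ∈ (ℝ^d)^n, ∑_i ‖x_i − x̄‖² = 1 }. Then for every configuration x in which not all agents are coincident, (∑_{i=1}^n ‖F(x)_i‖²)^{1/2} ≥ ν, and ν > 0. -/
open Finset

/-- The bearing from agent `i` to agent `j`: the unit vector pointing from `x i` to `x j`,
or `0` when the agents coincide. -/
noncomputable def bearing {d n : ℕ} (x : Fin n → EuclideanSpace ℝ (Fin d)) (i j : Fin n) :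
    EuclideanSpace ℝ (Fin d) :=
  ‖x j - x i‖⁻¹ • (x j - x i)

/-- The bearing-only consensus vector field `F(x)_i = ∑_{j ∈ N_i} u_{ij}(x)`. -/
noncomputable def consField {d n : ℕ} (G : SimpleGraph (Fin n)) [DecidableRel G.Adj]
    (x : Fin n → EuclideanSpace ℝ (Fin d)) (i : Fin n) : EuclideanSpace ℝ (Fin d) :=
  ∑ j ∈ G.neighborFinset i, bearing x i j

section auxLemmas

set_option linter.unusedSectionVars false

variable {d n : ℕ}

lemma bearing_neg_aux (x : Fin n → EuclideanSpace ℝ (Fin d)) (i j : Fin n) :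
    bearing x j i = - bearing x i j := by
  unfold bearing
  rw [show x i - x j = -(x j - x i) by abel, norm_neg, smul_neg]

lemma bearing_smul_aux {c : ℝ} (hc : 0 < c) (x : Fin n → EuclideanSpace ℝ (Fin d)) (i j : Fin n) :
    bearing (c • x) i j = bearing x i j := by
  unfold bearing
  have : (c • x) j - (c • x) i = c • (x j - x i) := by
    simp [Pi.smul_apply, smul_sub]
  rw [this, norm_smul, Real.norm_eq_abs, abs_of_pos hc]
  rcases eq_or_ne (x j - x i) 0 with h | h
  · simp [h]
  · have h' : ‖x j - x i‖ ≠ 0 := norm_ne_zero_iff.mpr h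
    rw [smul_smul, mul_inv]
    congr 1
    field_simp

lemma inner_bearing_aux (x : Fin n → EuclideanSpace ℝ (Fin d)) (i j : Fin n) :
    (inner ℝ (bearing x i j) (x i - x j) : ℝ) = -‖x j - x i‖ := by
  unfold bearing
  rw [show x i - x j = -(x j - x i) by abel, inner_neg_right, real_inner_smul_left,
    real_inner_self_eq_norm_sq]
  rcases eq_or_ne (x j - x i) 0 with h | h
  · simp [h]
  · have h' : ‖x j - x i‖ ≠ 0 := norm_ne_zero_iff.mpr h
    field_simp

/-- swap a double sum over adjacent pairs -/
lemma sum_nbr_comm_aux (G : SimpleGraph (Fin n)) [DecidableRel G.Adj] (f : Fin n → Fin n → ℝ) :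
    ∑ i, ∑ j ∈ G.neighborFinset i, f i j = ∑ i, ∑ j ∈ G.neighborFinset i, f j i := by
  have key : ∀ g : Fin n → Fin n → ℝ,
      ∑ i, ∑ j ∈ G.neighborFinset i, g i j = ∑ i, ∑ j, if G.Adj i j then g i j else 0 := by
    intro g
    refine Finset.sum_congr rfl fun i _ => ?_
    rw [show G.neighborFinset i = Finset.univ.filter (G.Adj i) by
      ext a; simp [SimpleGraph.mem_neighborFinset], Finset.sum_filter]
  rw [key, key, Finset.sum_comm]
  refine Finset.sum_congr rfl fun i _ => Finset.sum_congr rfl fun j _ => ?_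
  simp [SimpleGraph.adj_comm]

variable (G : SimpleGraph (Fin n)) [DecidableRel G.Adj]

lemma key_inner_aux (x : Fin n → EuclideanSpace ℝ (Fin d)) (c : EuclideanSpace ℝ (Fin d)) :
    (2:ℝ) * ∑ i, (inner ℝ (consField G x i) (x i - c) : ℝ)
      = -(∑ i, ∑ j ∈ G.neighborFinset i, ‖x j - x i‖) := by
  have h1 : ∑ i, (inner ℝ (consField G x i) (x i - c) : ℝ)
      = ∑ i, ∑ j ∈ G.neighborFinset i, (inner ℝ (bearing x i j) (x i - c) : ℝ) := by
    refine Finset.sum_congr rfl fun i _ => ?_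
    simp [consField, sum_inner]
  have pt : ∀ i j : Fin n, (inner ℝ (bearing x i j) (x i - c) : ℝ)
      + (inner ℝ (bearing x j i) (x j - c) : ℝ) = -‖x j - x i‖ := by
    intro i j
    rw [show bearing x j i = - bearing x i j from bearing_neg_aux x i j, inner_neg_left,
      ← sub_eq_add_neg, ← inner_sub_right, ← inner_bearing_aux x i j]
    congr 1
    abel
  rw [h1, two_mul]
  nth_rewrite 2 [sum_nbr_comm_aux G (fun i j => (inner ℝ (bearing x i j) (x i - c) : ℝ))]
  rw [← Finset.sum_add_distrib, ← Finset.sum_neg_distrib]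
  refine Finset.sum_congr rfl fun i _ => ?_
  rw [← Finset.sum_add_distrib, ← Finset.sum_neg_distrib]
  exact Finset.sum_congr rfl fun j _ => pt i j

lemma adj_le_S_aux (x : Fin n → EuclideanSpace ℝ (Fin d)) {a b : Fin n} (hab : G.Adj a b) :
    ‖x a - x b‖ ≤ ∑ i, ∑ j ∈ G.neighborFinset i, ‖x j - x i‖ := by
  rw [norm_sub_rev]
  calc ‖x b - x a‖ ≤ ∑ j ∈ G.neighborFinset a, ‖x j - x a‖ :=
        Finset.single_le_sum (f := fun j => ‖x j - x a‖) (fun j _ => norm_nonneg _)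
          (by rw [SimpleGraph.mem_neighborFinset]; exact hab)
    _ ≤ _ := Finset.single_le_sum (f := fun i => ∑ j ∈ G.neighborFinset i, ‖x j - x i‖)
        (fun i _ => Finset.sum_nonneg fun j _ => norm_nonneg _) (Finset.mem_univ a)

lemma walk_bound_aux (x : Fin n → EuclideanSpace ℝ (Fin d)) {S : ℝ}
    (hadj : ∀ a b : Fin n, G.Adj a b → ‖x a - x b‖ ≤ S)
    {i j : Fin n} (p : G.Walk i j) : ‖x i - x j‖ ≤ p.length * S := by
  induction p with
  | nil => simp
  | @cons u v w h q ih =>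
    have t : ‖x u - x w‖ ≤ ‖x u - x v‖ + ‖x v - x w‖ := norm_sub_le_norm_sub_add_norm_sub _ _ _
    have : ((q.cons h).length : ℝ) = q.length + 1 := by
      rw [SimpleGraph.Walk.length_cons]; push_cast; ring
    rw [this]
    have := hadj u v h
    nlinarith [ih]

lemma pair_bound_aux (hG : G.Connected) (x : Fin n → EuclideanSpace ℝ (Fin d)) {S : ℝ} (hS0 : 0 ≤ S)
    (hadj : ∀ a b : Fin n, G.Adj a b → ‖x a - x b‖ ≤ S) (i j : Fin n) :
    ‖x i - x j‖ ≤ n * S := by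
  obtain ⟨p⟩ := hG.preconnected i j
  have h1 : ‖x i - x j‖ ≤ (p.toPath : G.Walk i j).length * S := walk_bound_aux G x hadj _
  have h2 : ((p.toPath : G.Walk i j).length : ℝ) ≤ n := by
    have := p.toPath.2.length_lt
    rw [Fintype.card_fin] at this
    exact_mod_cast this.le
  calc ‖x i - x j‖ ≤ (p.toPath : G.Walk i j).length * S := h1
    _ ≤ n * S := mul_le_mul_of_nonneg_right h2 hS0

lemma centroid_sub_aux (hn : 0 < n) (x : Fin n → EuclideanSpace ℝ (Fin d)) (i : Fin n) :
    x i - (n:ℝ)⁻¹ • ∑ j, x j = (n:ℝ)⁻¹ • ∑ j : Fin n, (x i - x j) := by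
  rw [Finset.sum_sub_distrib, smul_sub, Finset.sum_const, card_univ, Fintype.card_fin]
  congr 1
  rw [← Nat.cast_smul_eq_nsmul ℝ, smul_smul, inv_mul_cancel₀ (by positivity), one_smul]

/-- the uniform positive lower bound on the constraint set -/
lemma value_lb_aux (hn : 2 ≤ n) (hG : G.Connected) (x : Fin n → EuclideanSpace ℝ (Fin d))
    (hx : (∑ i, ‖x i - (n : ℝ)⁻¹ • ∑ j, x j‖ ^ 2) = 1) :
    Real.sqrt (((n:ℝ)^3)⁻¹) / 2 ≤ Real.sqrt (∑ i, ‖consField G x i‖ ^ 2) := by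
  have hn0 : (0:ℝ) < n := by positivity
  set S : ℝ := ∑ i, ∑ j ∈ G.neighborFinset i, ‖x j - x i‖ with hSdef
  have hS0 : 0 ≤ S := Finset.sum_nonneg fun i _ =>
    Finset.sum_nonneg fun j _ => norm_nonneg _
  set c : EuclideanSpace ℝ (Fin d) := (n : ℝ)⁻¹ • ∑ j, x j with hc
  have hadjS : ∀ a b : Fin n, G.Adj a b → ‖x a - x b‖ ≤ S :=
    fun a b hab => adj_le_S_aux G x hab
  have hcb : ∀ i : Fin n, ‖x i - c‖ ≤ n * S := by
    intro i
    rw [hc, centroid_sub_aux (by omega) x i]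
    calc ‖(n:ℝ)⁻¹ • ∑ j : Fin n, (x i - x j)‖
        = (n:ℝ)⁻¹ * ‖∑ j : Fin n, (x i - x j)‖ := by
          rw [norm_smul, Real.norm_eq_abs, abs_of_pos (by positivity)]
      _ ≤ (n:ℝ)⁻¹ * ∑ j : Fin n, ‖x i - x j‖ := by
          gcongr
          exact norm_sum_le _ _
      _ ≤ (n:ℝ)⁻¹ * ∑ j : Fin n, ((n:ℝ) * S) := by
          gcongr with j
          exact pair_bound_aux G hG x hS0 hadjS i j
      _ = n * S := by
          rw [Finset.sum_const, card_univ, Fintype.card_fin, nsmul_eq_mul]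
          field_simp
  have h1 : (1:ℝ) ≤ n^3 * S^2 := by
    calc (1:ℝ) = ∑ i, ‖x i - c‖ ^ 2 := hx.symm
      _ ≤ ∑ _i : Fin n, ((n:ℝ) * S)^2 :=
          Finset.sum_le_sum fun i _ => pow_le_pow_left₀ (norm_nonneg _) (hcb i) 2
      _ = n * ((n:ℝ) * S)^2 := by
          rw [Finset.sum_const, card_univ, Fintype.card_fin, nsmul_eq_mul]
      _ = n^3 * S^2 := by ring
  set Q : ℝ := ∑ i, ‖consField G x i‖ ^ 2 with hQ
  have hQ0 : 0 ≤ Q := Finset.sum_nonneg fun i _ => sq_nonneg _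
  have hcs : S / 2 ≤ Real.sqrt Q := by
    have hP : S / 2 ≤ ∑ i, ‖consField G x i‖ * ‖x i - c‖ := by
      have e1 : S / 2 = -∑ i, (inner ℝ (consField G x i) (x i - c) : ℝ) := by
        have := key_inner_aux G x c
        rw [← hSdef] at this
        linarith
      rw [e1]
      calc -∑ i, (inner ℝ (consField G x i) (x i - c) : ℝ)
          ≤ ∑ i, |(inner ℝ (consField G x i) (x i - c) : ℝ)| := by
            rw [← Finset.sum_neg_distrib]
            exact Finset.sum_le_sum fun i _ => neg_le_abs _
        _ ≤ ∑ i, ‖consField G x i‖ * ‖x i - c‖ :=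
            Finset.sum_le_sum fun i _ => abs_real_inner_le_norm _ _
    have hP2 : (∑ i, ‖consField G x i‖ * ‖x i - c‖)^2 ≤ Q := by
      calc (∑ i, ‖consField G x i‖ * ‖x i - c‖)^2
          ≤ (∑ i, ‖consField G x i‖^2) * ∑ i, ‖x i - c‖^2 :=
            Finset.sum_mul_sq_le_sq_mul_sq _ _ _
        _ = Q := by rw [← hQ, hx, mul_one]
    have : ∑ i, ‖consField G x i‖ * ‖x i - c‖ ≤ Real.sqrt Q :=
      Real.le_sqrt_of_sq_le hP2
    linarith
  have hs : Real.sqrt (((n:ℝ)^3)⁻¹) ≤ S := by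
    have : ((n:ℝ)^3)⁻¹ ≤ S^2 := by
      rw [inv_le_iff_one_le_mul₀ (by positivity)]
      linarith
    calc Real.sqrt (((n:ℝ)^3)⁻¹) ≤ Real.sqrt (S^2) := Real.sqrt_le_sqrt this
      _ = S := Real.sqrt_sq hS0
  linarith

/-- rescaling a noncoincident configuration into the constraint set -/
lemma rescale_aux (hn : 2 ≤ n) (x : Fin n → EuclideanSpace ℝ (Fin d))
    (hx : ¬ ∀ i j, x i = x j) :
    ∃ y : Fin n → EuclideanSpace ℝ (Fin d),
      (∑ i, ‖y i - (n : ℝ)⁻¹ • ∑ j, y j‖ ^ 2) = 1 ∧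
      (∑ i, ‖consField G y i‖ ^ 2) = (∑ i, ‖consField G x i‖ ^ 2) := by
  have hn0 : (0:ℝ) < n := by positivity
  set c : EuclideanSpace ℝ (Fin d) := (n : ℝ)⁻¹ • ∑ j, x j with hc
  set V : ℝ := ∑ i, ‖x i - c‖ ^ 2 with hV
  have hV0 : 0 < V := by
    push_neg at hx
    obtain ⟨i, j, hij⟩ := hx
    have : x i ≠ c ∨ x j ≠ c := by
      by_contra h
      push_neg at h
      exact hij (h.1.trans h.2.symm)
    obtain ⟨k, hk⟩ : ∃ k, x k ≠ c := this.elim (fun h => ⟨i, h⟩) (fun h => ⟨j, h⟩)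
    have hpos : 0 < ‖x k - c‖ ^ 2 := by
      have h2 : x k - c ≠ 0 := sub_ne_zero_of_ne hk
      have h3 : 0 < ‖x k - c‖ := norm_pos_iff.mpr h2
      positivity
    calc (0:ℝ) < ‖x k - c‖ ^ 2 := hpos
      _ ≤ V := Finset.single_le_sum (f := fun i => ‖x i - c‖ ^ 2)
          (fun i _ => sq_nonneg _) (Finset.mem_univ k)
  set σ : ℝ := Real.sqrt V with hσ
  have hσ0 : 0 < σ := Real.sqrt_pos.mpr hV0
  refine ⟨σ⁻¹ • x, ?_, ?_⟩
  · have hcent : (n : ℝ)⁻¹ • ∑ j, (σ⁻¹ • x) j = σ⁻¹ • c := by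
      rw [hc]
      simp only [Pi.smul_apply]
      rw [← Finset.smul_sum, smul_comm]
    have h4 : ∀ i, (σ⁻¹ • x) i - (n : ℝ)⁻¹ • ∑ j, (σ⁻¹ • x) j = σ⁻¹ • (x i - c) := by
      intro i
      rw [hcent]
      simp [Pi.smul_apply, smul_sub]
    simp only [h4]
    have h5 : ∀ i, ‖σ⁻¹ • (x i - c)‖ ^ 2 = σ⁻¹ ^ 2 * ‖x i - c‖ ^ 2 := by
      intro i
      rw [norm_smul, Real.norm_eq_abs, abs_of_pos (by positivity), mul_pow]
    simp only [h5]
    rw [← Finset.mul_sum, ← hV]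
    have : σ ^ 2 = V := Real.sq_sqrt hV0.le
    field_simp
    linarith [this]
  · have : consField G (σ⁻¹ • x) = consField G x := by
      funext i
      unfold consField
      exact Finset.sum_congr rfl fun j _ => bearing_smul_aux (by positivity) x i j
    rw [this]

end auxLemmas

theorem stmt_3 {d n : ℕ} (hd : 1 ≤ d) (hn : 2 ≤ n)
    (G : SimpleGraph (Fin n)) [DecidableRel G.Adj] (hG : G.Connected)
    (ν : ℝ)
    (hν : ν = sInf { r : ℝ | ∃ x : Fin n → EuclideanSpace ℝ (Fin d),
        (∑ i, ‖x i - (n : ℝ)⁻¹ • ∑ j, x j‖ ^ 2) = 1 ∧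
        r = Real.sqrt (∑ i, ‖consField G x i‖ ^ 2) }) :
    (∀ x : Fin n → EuclideanSpace ℝ (Fin d), (¬ ∀ i j, x i = x j) →
        ν ≤ Real.sqrt (∑ i, ‖consField G x i‖ ^ 2)) ∧ 0 < ν := by
  have hn0 : (0:ℝ) < n := by positivity
  set A : Set ℝ := { r : ℝ | ∃ x : Fin n → EuclideanSpace ℝ (Fin d),
      (∑ i, ‖x i - (n : ℝ)⁻¹ • ∑ j, x j‖ ^ 2) = 1 ∧
      r = Real.sqrt (∑ i, ‖consField G x i‖ ^ 2) } with hA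
  have hbdd : BddBelow A := by
    refine ⟨0, ?_⟩
    rintro r ⟨x, -, rfl⟩
    exact Real.sqrt_nonneg _
  -- nonemptiness via an explicit noncoincident configuration
  have hAne : A.Nonempty := by
    set v : EuclideanSpace ℝ (Fin d) := EuclideanSpace.single (⟨0, hd⟩ : Fin d) (1:ℝ) with hv
    have hvne : v ≠ 0 := by
      intro h
      have := congrArg (fun w : EuclideanSpace ℝ (Fin d) => w (⟨0, hd⟩ : Fin d)) h
      simp [hv, EuclideanSpace.single_apply] at this
    set x₀ : Fin n → EuclideanSpace ℝ (Fin d) :=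
      fun i => if i = (⟨0, by omega⟩ : Fin n) then v else 0 with hx₀
    have hnc : ¬ ∀ i j, x₀ i = x₀ j := by
      intro h
      have h01 := h (⟨0, by omega⟩ : Fin n) (⟨1, by omega⟩ : Fin n)
      have hne01 : (⟨1, by omega⟩ : Fin n) ≠ (⟨0, by omega⟩ : Fin n) := by
        intro hcontra
        simpa using congrArg Fin.val hcontra
      rw [hx₀] at h01
      simp only [if_pos rfl, if_neg hne01] at h01
      exact hvne h01
    obtain ⟨y, hy1, hy2⟩ := rescale_aux G hn x₀ hnc
    exact ⟨Real.sqrt (∑ i, ‖consField G y i‖ ^ 2), y, hy1, rfl⟩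
  constructor
  · intro x hx
    obtain ⟨y, hy1, hy2⟩ := rescale_aux G hn x hx
    have hmem : Real.sqrt (∑ i, ‖consField G x i‖ ^ 2) ∈ A := ⟨y, hy1, by rw [hy2]⟩
    rw [hν]
    exact csInf_le hbdd hmem
  · rw [hν]
    have hlb : ∀ r ∈ A, Real.sqrt (((n:ℝ)^3)⁻¹) / 2 ≤ r := by
      rintro r ⟨x, hx1, rfl⟩
      exact value_lb_aux G hn hG x hx1
    have hpos : 0 < Real.sqrt (((n:ℝ)^3)⁻¹) / 2 := by
      have : (0:ℝ) < ((n:ℝ)^3)⁻¹ := by positivity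
      have := Real.sqrt_pos.mpr this
      linarith
    exact lt_of_lt_of_le hpos (le_csInf hAne hlb)
end

section
/- Let G be an undirected graph on vertices {1,…,n} and d ≥ 1. If x : ℝ → (ℝ^d)^n is differentiable and satisfies xᵢ′(t) = F(x(t))_i for all i and all t, then the centroid (1/n)∑_{i=1}^n x_i(t) is constant in t. -/
open Finset

lemma bearing_antisymm {d n : ℕ} (x : Fin n → EuclideanSpace ℝ (Fin d)) (i j : Fin n) :
    bearing x j i = - bearing x i j := by
  simp only [bearing]
  rw [show x i - x j = -(x j - x i) by abel, norm_neg, smul_neg]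

lemma sum_consField_eq_zero {d n : ℕ} (G : SimpleGraph (Fin n)) [DecidableRel G.Adj]
    (x : Fin n → EuclideanSpace ℝ (Fin d)) :
    ∑ i, consField G x i = 0 := by
  have h : ∑ i, consField G x i
      = ∑ i, ∑ j, if G.Adj i j then bearing x i j else 0 := by
    refine Finset.sum_congr rfl fun i _ => ?_
    rw [consField, ← Finset.sum_filter]
    congr 1
    ext j
    simp [SimpleGraph.mem_neighborFinset]
  rw [h]
  have h2 : ∑ i, ∑ j, (if G.Adj i j then bearing x i j else 0)
      = - ∑ i, ∑ j, (if G.Adj i j then bearing x i j else 0) := by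
    conv_lhs => rw [Finset.sum_comm]
    rw [← Finset.sum_neg_distrib]
    refine Finset.sum_congr rfl fun i _ => ?_
    rw [← Finset.sum_neg_distrib]
    refine Finset.sum_congr rfl fun j _ => ?_
    by_cases hij : G.Adj i j
    · rw [if_pos hij, if_pos hij.symm, bearing_antisymm]
    · rw [if_neg hij, if_neg (fun h => hij h.symm), neg_zero]
  have h3 : (2:ℝ) • (∑ i, ∑ j, (if G.Adj i j then bearing x i j else 0)) = 0 := by
    rw [two_smul]
    nth_rewrite 2 [h2]
    abel
  rcases smul_eq_zero.mp h3 with h | h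
  · norm_num at h
  · exact h

theorem stmt_4 {d n : ℕ} (hd : 1 ≤ d)
    (G : SimpleGraph (Fin n)) [DecidableRel G.Adj]
    (x : ℝ → Fin n → EuclideanSpace ℝ (Fin d))
    (hode : ∀ i t, HasDerivAt (fun s => x s i) (consField G (x t) i) t) :
    ∀ t₁ t₂ : ℝ, (n : ℝ)⁻¹ • ∑ i, x t₁ i = (n : ℝ)⁻¹ • ∑ i, x t₂ i := by
  have hS : ∀ t, HasDerivAt (fun s => ∑ i, x s i) 0 t := by
    intro t
    have := HasDerivAt.fun_sum (u := Finset.univ)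
      (fun i _ => hode i t)
    rwa [sum_consField_eq_zero] at this
  intro t₁ t₂
  have hdiff : Differentiable ℝ (fun s => ∑ i, x s i) := fun t => (hS t).differentiableAt
  have hderiv : ∀ t, deriv (fun s => ∑ i, x s i) t = 0 := fun t => (hS t).deriv
  have := is_const_of_deriv_eq_zero hdiff hderiv t₁ t₂
  rw [this]
end

section
/- Let G be an undirected graph on {1,…,n} with edge set E, d ≥ 1, and for each edge {i,j} let u*_{ij} ∈ ℝ^d be a unit vector with u*_{ji} = −u*_{ij}. Suppose x : [0,T] → (ℝ^d)^n is differentiable, satisfies xᵢ′(t) = ∑_{j ∈ N_i}(u_{ij}(x(t)) − u*_{ij}) for all i and t, and x_i(t) ≠ x_j(t) for every edge {i,j} and every t ∈ [0,T]. Then with ψ(x) = ∑_{{i,j} ∈ E} (1/2)‖x_j − x_i‖·‖u_{ij}(x) − u*_{ij}‖², the function t ↦ ψ(x(t)) is differentiable with derivative −∑_{i=1}^n ‖xᵢ′(t)‖² ≤ 0; in particular ψ(x(t)) is nonincreasing. -/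
open Finset

/-- The bearing-only formation control field `F(x)_i = ∑_{j ∈ N_i} (u_{ij}(x) - u*_{ij})`. -/
noncomputable def formField {d n : ℕ} (G : SimpleGraph (Fin n)) [DecidableRel G.Adj]
    (ustar : Fin n → Fin n → EuclideanSpace ℝ (Fin d))
    (x : Fin n → EuclideanSpace ℝ (Fin d)) (i : Fin n) : EuclideanSpace ℝ (Fin d) :=
  ∑ j ∈ G.neighborFinset i, (bearing x i j - ustar i j)

/-- The formation potential `ψ(x) = ∑_{{i,j} ∈ E} (1/2) ‖x_j - x_i‖ ‖u_{ij}(x) - u*_{ij}‖²`,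
with each unordered edge counted once (hence half the sum over ordered adjacent pairs;
the summand is symmetric in `i, j` since `u*_{ji} = -u*_{ij}`). -/
noncomputable def formPotential {d n : ℕ} (G : SimpleGraph (Fin n)) [DecidableRel G.Adj]
    (ustar : Fin n → Fin n → EuclideanSpace ℝ (Fin d))
    (x : Fin n → EuclideanSpace ℝ (Fin d)) : ℝ :=
  (1 / 2) * ∑ i, ∑ j ∈ G.neighborFinset i,
    (1 / 2) * ‖x j - x i‖ * ‖bearing x i j - ustar i j‖ ^ 2

local notation "⟪" a ", " b "⟫" => @inner ℝ _ _ a b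

lemma hasDerivAt_norm_comp {E : Type*} [NormedAddCommGroup E] [InnerProductSpace ℝ E]
    {c : ℝ → E} {c' : E} {t : ℝ} (hc : HasDerivAt c c' t) (h : c t ≠ 0) :
    HasDerivAt (fun s => ‖c s‖) (⟪c t, c'⟫ / ‖c t‖) t := by
  have h1 : HasDerivAt (fun s => ⟪c s, c s⟫) (⟪c t, c'⟫ + ⟪c', c t⟫) t := hc.inner ℝ hc
  have h0 : ⟪c t, c t⟫ ≠ (0:ℝ) := fun hh => h (inner_self_eq_zero.mp hh)
  have h2 := h1.sqrt h0
  have hne : ‖c t‖ ≠ 0 := norm_ne_zero_iff.mpr h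
  have heq : (fun s => Real.sqrt ⟪c s, c s⟫) = fun s => ‖c s‖ := by
    funext s
    rw [real_inner_self_eq_norm_sq, Real.sqrt_sq (norm_nonneg _)]
  rw [heq] at h2
  convert h2 using 1
  rw [real_inner_self_eq_norm_sq, Real.sqrt_sq (norm_nonneg _), real_inner_comm c' (c t)]
  field_simp
  ring

lemma swap_sum {n : ℕ} (G : SimpleGraph (Fin n)) [DecidableRel G.Adj] (f : Fin n → Fin n → ℝ) :
    ∑ i, ∑ j ∈ G.neighborFinset i, f i j = ∑ i, ∑ j ∈ G.neighborFinset i, f j i := by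
  simp only [SimpleGraph.neighborFinset_eq_filter, Finset.sum_filter]
  rw [Finset.sum_comm]
  exact Finset.sum_congr rfl fun i _ => Finset.sum_congr rfl fun j _ => by
    by_cases h : G.Adj i j
    · rw [if_pos h, if_pos (G.adj_symm h)]
    · rw [if_neg h, if_neg (fun hh => h (G.adj_symm hh))]

lemma bearing_anti {d n : ℕ} (y : Fin n → EuclideanSpace ℝ (Fin d)) (i j : Fin n) :
    bearing y j i = -bearing y i j := by
  unfold bearing
  rw [show y i - y j = -(y j - y i) by abel, norm_neg, smul_neg]

lemma pot_eq {d n : ℕ} (G : SimpleGraph (Fin n)) [DecidableRel G.Adj]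
    (ustar : Fin n → Fin n → EuclideanSpace ℝ (Fin d))
    (hunit : ∀ i j, G.Adj i j → ‖ustar i j‖ = 1)
    (y : Fin n → EuclideanSpace ℝ (Fin d)) (hy : ∀ i j, G.Adj i j → y i ≠ y j) :
    formPotential G ustar y =
      (1 / 2) * ∑ i, ∑ j ∈ G.neighborFinset i, (‖y j - y i‖ - ⟪y j - y i, ustar i j⟫) := by
  unfold formPotential
  congr 1
  refine Finset.sum_congr rfl fun i _ => Finset.sum_congr rfl fun j hj => ?_
  rw [SimpleGraph.mem_neighborFinset] at hj
  have hne : y j - y i ≠ 0 := sub_ne_zero.mpr fun h => hy i j hj h.symm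
  have hn : ‖y j - y i‖ ≠ 0 := norm_ne_zero_iff.mpr hne
  have hb : ‖bearing y i j‖ = 1 := by
    unfold bearing
    rw [norm_smul, norm_inv, norm_norm, inv_mul_cancel₀ hn]
  rw [norm_sub_sq_real, hb, hunit i j hj]
  unfold bearing
  rw [real_inner_smul_left]
  field_simp
  ring

theorem stmt_10 {d n : ℕ} (hd : 1 ≤ d)
    (G : SimpleGraph (Fin n)) [DecidableRel G.Adj]
    (ustar : Fin n → Fin n → EuclideanSpace ℝ (Fin d))
    (hunit : ∀ i j, G.Adj i j → ‖ustar i j‖ = 1)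
    (hskew : ∀ i j, G.Adj i j → ustar j i = -ustar i j)
    (T : ℝ) (hT : 0 ≤ T)
    (x : ℝ → Fin n → EuclideanSpace ℝ (Fin d))
    (hode : ∀ i, ∀ t ∈ Set.Icc (0 : ℝ) T,
      HasDerivAt (fun s => x s i) (formField G ustar (x t) i) t)
    (hfree : ∀ t ∈ Set.Icc (0 : ℝ) T, ∀ i j, G.Adj i j → x t i ≠ x t j) :
    (∀ t ∈ Set.Icc (0 : ℝ) T,
      HasDerivAt (fun s => formPotential G ustar (x s))
        (-(∑ i, ‖formField G ustar (x t) i‖ ^ 2)) t) ∧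
    (∀ s ∈ Set.Icc (0 : ℝ) T, ∀ t ∈ Set.Icc (0 : ℝ) T, s ≤ t →
      formPotential G ustar (x t) ≤ formPotential G ustar (x s)) := by
  have key : ∀ t ∈ Set.Icc (0 : ℝ) T,
      HasDerivAt (fun s => formPotential G ustar (x s))
        (-(∑ i, ‖formField G ustar (x t) i‖ ^ 2)) t := by
    intro t ht
    set F := formField G ustar (x t) with hF
    have hxc : ∀ i, ContinuousAt (fun s => x s i) t := fun i => (hode i t ht).continuousAt
    have hev : ∀ᶠ s in nhds t, ∀ i j, G.Adj i j → x s i ≠ x s j := by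
      rw [Filter.eventually_all]
      intro i
      rw [Filter.eventually_all]
      intro j
      by_cases h : G.Adj i j
      · have hc : ContinuousAt (fun s => x s i - x s j) t := (hxc i).sub (hxc j)
        have hne : x t i - x t j ≠ 0 := sub_ne_zero.mpr (hfree t ht i j h)
        filter_upwards [hc.eventually_ne hne] with s hs _
        exact sub_ne_zero.mp hs
      · filter_upwards with s hadj
        exact absurd hadj h
    have heq : (fun s => formPotential G ustar (x s)) =ᶠ[nhds t]
        (fun s => (1 / 2) * ∑ i, ∑ j ∈ G.neighborFinset i,
          (‖x s j - x s i‖ - ⟪x s j - x s i, ustar i j⟫)) := by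
      filter_upwards [hev] with s hs
      exact pot_eq G ustar hunit (x s) hs
    rw [heq.hasDerivAt_iff]
    have hderiv : ∀ i, ∀ j ∈ G.neighborFinset i,
        HasDerivAt (fun s => ‖x s j - x s i‖ - ⟪x s j - x s i, ustar i j⟫)
          (⟪bearing (x t) i j - ustar i j, F j - F i⟫) t := by
      intro i j hj
      rw [SimpleGraph.mem_neighborFinset] at hj
      have hc : HasDerivAt (fun s => x s j - x s i) (F j - F i) t :=
        (hode j t ht).sub (hode i t ht)
      have hne : x t j - x t i ≠ 0 := sub_ne_zero.mpr fun h => hfree t ht i j hj h.symm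
      have hnn : ‖x t j - x t i‖ ≠ 0 := norm_ne_zero_iff.mpr hne
      have h1 := hasDerivAt_norm_comp hc hne
      have h2 : HasDerivAt (fun s => ⟪x s j - x s i, ustar i j⟫) (⟪F j - F i, ustar i j⟫) t := by
        have := hc.inner ℝ (hasDerivAt_const (𝕜 := ℝ) t (ustar i j))
        simpa using this
      refine (h1.sub h2).congr_deriv (Eq.symm ?_)
      rw [inner_sub_left]
      congr 1
      · unfold bearing
        rw [real_inner_smul_left]
        field_simp
      · exact real_inner_comm _ _
    have hsum : HasDerivAt (fun s => (1 / 2) * ∑ i, ∑ j ∈ G.neighborFinset i,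
          (‖x s j - x s i‖ - ⟪x s j - x s i, ustar i j⟫))
        ((1 / 2) * ∑ i, ∑ j ∈ G.neighborFinset i,
          ⟪bearing (x t) i j - ustar i j, F j - F i⟫) t := by
      apply HasDerivAt.const_mul
      exact HasDerivAt.fun_sum fun i _ => HasDerivAt.fun_sum fun j hj => hderiv i j hj
    refine hsum.congr_deriv (Eq.symm ?_)
    set g : Fin n → Fin n → EuclideanSpace ℝ (Fin d) :=
      fun i j => bearing (x t) i j - ustar i j with hg
    have hanti : ∀ i j, G.Adj i j → g j i = -g i j := by
      intro i j h
      show bearing (x t) j i - ustar j i = -(bearing (x t) i j - ustar i j)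
      rw [bearing_anti, hskew i j h]
      abel
    have hFi : ∀ i, F i = ∑ j ∈ G.neighborFinset i, g i j := fun i => rfl
    have step1 : ∑ i, ∑ j ∈ G.neighborFinset i, ⟪g i j, F j - F i⟫
        = ∑ i, ∑ j ∈ G.neighborFinset i, ⟪g i j, F j⟫
          - ∑ i, ∑ j ∈ G.neighborFinset i, ⟪g i j, F i⟫ := by
      rw [← Finset.sum_sub_distrib]
      refine Finset.sum_congr rfl fun i _ => ?_
      rw [← Finset.sum_sub_distrib]
      exact Finset.sum_congr rfl fun j _ => inner_sub_right _ _ _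
    have step2 : ∑ i, ∑ j ∈ G.neighborFinset i, ⟪g i j, F j⟫
        = -∑ i, ∑ j ∈ G.neighborFinset i, ⟪g i j, F i⟫ := by
      rw [swap_sum G (fun i j => ⟪g i j, F j⟫), ← Finset.sum_neg_distrib]
      refine Finset.sum_congr rfl fun i _ => ?_
      rw [← Finset.sum_neg_distrib]
      refine Finset.sum_congr rfl fun j hj => ?_
      rw [SimpleGraph.mem_neighborFinset] at hj
      rw [hanti i j hj, inner_neg_left]
    have step3 : ∀ i, ∑ j ∈ G.neighborFinset i, ⟪g i j, F i⟫ = ‖F i‖ ^ 2 := by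
      intro i
      rw [← sum_inner, ← hFi i, real_inner_self_eq_norm_sq]
    have : ∑ i, ∑ j ∈ G.neighborFinset i, ⟪g i j, F j - F i⟫ = -2 * ∑ i, ‖F i‖ ^ 2 := by
      rw [step1, step2]
      rw [Finset.sum_congr rfl fun i _ => step3 i]
      ring
    rw [this]
    ring
  refine ⟨key, fun s hs t ht hst => ?_⟩
  have hanti : AntitoneOn (fun s => formPotential G ustar (x s)) (Set.Icc 0 T) := by
    apply antitoneOn_of_deriv_nonpos (convex_Icc 0 T)
    · intro u hu
      exact (key u hu).continuousAt.continuousWithinAt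
    · intro u hu
      exact ((key u (interior_subset hu)).differentiableAt).differentiableWithinAt
    · intro u hu
      rw [(key u (interior_subset hu)).deriv]
      exact neg_nonpos.mpr (Finset.sum_nonneg fun i _ => sq_nonneg _)
  exact hanti hs ht hst
end
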